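/- Let Φ be of type G₂ and P_k Kostant's partition function. For every λ = aω₁ + bω₂ with a ≥ 1 and 0 ≤ b ≤ 2, and every k ≤ a + b − 2, the alternating sum ∑_{u ∈ W} (−1)^{ℓ(u)} P_k(u·λ − ω₁) equals 0. -/

import Mathlib

noncomputable section

/-- the weight space of `G₂`, in coordinates with respect to the simple roots `α₁, α₂`
(`α₁` short) -/
abbrev VG := Fin 2 → ℚ

/-- The six positive roots of `G₂`: `α₁, α₂, α₁+α₂, 2α₁+α₂, 3α₁+α₂, 3α₁+2α₂`. -/
def posG : Finset VG := {![1, 0], ![0, 1], ![1, 1], ![2, 1], ![3, 1], ![3, 2]}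

/-- Kostant's partition function: the number of ways (as unordered multisets) to write `ν`
as a sum of exactly `k` positive roots. -/
def PG (k : ℕ) (ν : VG) : ℕ :=
  Set.ncard {m : Multiset VG | Multiset.card m = k ∧ (∀ x ∈ m, x ∈ posG) ∧ m.sum = ν}

/-- the Cartan matrix of `G₂` (`α₁` short); the `(i,j)` entry is `⟨α_j, α_i^∨⟩` -/
def CG : Matrix (Fin 2) (Fin 2) ℚ := !![2, -3; -1, 2]

/-- the simple reflection `s_i` acting on the weight space:
`s_i(x) = x - ⟨x, α_i^∨⟩ α_i` -/
def sG (i : Fin 2) : VG → VG := fun x => x - (∑ j, x j * CG i j) • (Pi.single i 1 : VG)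

/-- the fundamental weight `ω₁ = 2α₁ + α₂` -/
def ω₁G : VG := ![2, 1]

/-- the fundamental weight `ω₂ = 3α₁ + 2α₂` -/
def ω₂G : VG := ![3, 2]

/-- the half-sum `ρ` of the positive roots -/
def ρG : VG := (2 : ℚ)⁻¹ • ∑ α ∈ posG, α

/-- the composite of the simple reflections listed in `l` -/
def compG (l : List (Fin 2)) : VG → VG := (l.map sG).foldr (· ∘ ·) id

/-- the length of a Weyl group element: the minimal length of a word in the simple
reflections representing it -/
def lenG (u : VG → VG) : ℕ := sInf {m | ∃ l : List (Fin 2), l.length = m ∧ u = compG l}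

/-! ### Auxiliary material -/

/-- the matrices of the two simple reflections (in root coordinates, acting by `mulVec`) -/
def matG : Fin 2 → Matrix (Fin 2) (Fin 2) ℚ := ![!![-1,3;0,1], !![1,0;1,-1]]

/-- the twelve elements of the Weyl group of `G₂`, as matrices -/
def G12 : List (Matrix (Fin 2) (Fin 2) ℚ) :=
  [1, !![-1,3;0,1], !![1,0;1,-1], !![2,-3;1,-1], !![-1,3;-1,2], !![-2,3;-1,2],
   !![2,-3;1,-2], !![1,-3;1,-2], !![-2,3;-1,1], !![-1,0;-1,1], !![1,-3;0,-1], !![-1,0;0,-1]]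

lemma sG_eq (i : Fin 2) : sG i = (matG i).mulVec := by
  fin_cases i <;> funext x <;> funext j <;> fin_cases j <;>
    simp [sG, matG, CG, Matrix.mulVec, dotProduct, Fin.sum_univ_two, Pi.single_apply] <;>
    ring

lemma compG_eq (l : List (Fin 2)) : compG l = ((l.map matG).prod).mulVec := by
  induction l with
  | nil => funext x; simp [compG, Matrix.one_mulVec]
  | cons i l ih =>
      have h : compG (i :: l) = sG i ∘ compG l := rfl
      rw [h, ih, sG_eq]
      funext x
      simp only [Function.comp_apply, List.map_cons, List.prod_cons, Matrix.mulVec_mulVec]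

set_option maxHeartbeats 1000000 in
lemma closure_step : ∀ A ∈ G12, ∀ i : Fin 2, matG i * A ∈ G12 := by
  intro A hA i
  simp only [G12, List.mem_cons, List.not_mem_nil, or_false] at hA
  fin_cases i <;>
    rcases hA with rfl|rfl|rfl|rfl|rfl|rfl|rfl|rfl|rfl|rfl|rfl|rfl <;>
    norm_num [matG, G12, Matrix.mul_fin_two, ← Matrix.one_fin_two, List.mem_cons]

lemma prodG_mem (l : List (Fin 2)) : ((l.map matG).prod) ∈ G12 := by
  induction l with
  | nil => simp [G12]
  | cons i l ih => rw [List.map_cons, List.prod_cons]; exact closure_step _ ih i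

lemma mulVec_injective :
    Function.Injective (Matrix.mulVec : Matrix (Fin 2) (Fin 2) ℚ → VG → VG) := by
  intro A B h
  ext i j
  have h2 := congrFun (congrFun h (Pi.single j 1)) i
  simpa [Matrix.mulVec_single] using h2

lemma rho_eq : ρG = ![5, 3] := by
  norm_num [ρG, posG, Finset.sum_insert, Finset.mem_insert, funext_iff, Fin.forall_fin_two]

lemma mulVec_expand (p q r s x y : ℚ) :
    (!![p,q;r,s]).mulVec ![x,y] = ![p*x+q*y, r*x+s*y] := by
  funext i
  fin_cases i <;> simp [Matrix.mulVec, dotProduct, Fin.sum_univ_two]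

lemma nu_calc (p q r s x y : ℚ) :
    (!![p,q;r,s]).mulVec ![x,y] - ρG - ω₁G = ![p*x+q*y-7, r*x+s*y-4] := by
  rw [mulVec_expand, rho_eq, ω₁G]
  funext i
  fin_cases i <;> simp <;> ring

lemma vec2_eq {α β γ δ : ℚ} (h1 : α = γ) (h2 : β = δ) : ![α,β] = ![γ,δ] := by rw [h1, h2]

/-- decomposition of a multiset of positive roots into replicates -/
lemma decompose (m : Multiset VG) (hm : ∀ x ∈ m, x ∈ posG) :
    m = Multiset.replicate (m.count ![1,0]) ![1,0] + Multiset.replicate (m.count ![0,1]) ![0,1]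
      + Multiset.replicate (m.count ![1,1]) ![1,1] + Multiset.replicate (m.count ![2,1]) ![2,1]
      + Multiset.replicate (m.count ![3,1]) ![3,1]
      + Multiset.replicate (m.count ![3,2]) ![3,2] := by
  ext a
  simp only [Multiset.count_add, Multiset.count_replicate]
  by_cases ha : a ∈ posG
  · simp only [posG, Finset.mem_insert, Finset.mem_singleton] at ha
    rcases ha with rfl|rfl|rfl|rfl|rfl|rfl <;>
      norm_num [funext_iff, Fin.forall_fin_two]
  · have hz : Multiset.count a m = 0 := Multiset.count_eq_zero.2 (fun h => ha (hm a h))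
    have hne : ∀ r : VG, r ∈ posG → ¬ (r = a) := fun r hr h => ha (h ▸ hr)
    rw [hz, if_neg (hne _ (by simp [posG])), if_neg (hne _ (by simp [posG])),
      if_neg (hne _ (by simp [posG])), if_neg (hne _ (by simp [posG])),
      if_neg (hne _ (by simp [posG])), if_neg (hne _ (by simp [posG]))]

lemma count_eqs (m : Multiset VG) (hm : ∀ x ∈ m, x ∈ posG) :
    (Multiset.card m : ℚ) = m.count ![1,0] + m.count ![0,1] + m.count ![1,1]
        + m.count ![2,1] + m.count ![3,1] + m.count ![3,2]
    ∧ m.sum 0 = m.count ![1,0] + m.count ![1,1] + 2*m.count ![2,1]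
        + 3*m.count ![3,1] + 3*m.count ![3,2]
    ∧ m.sum 1 = m.count ![0,1] + m.count ![1,1] + m.count ![2,1]
        + m.count ![3,1] + 2*m.count ![3,2] := by
  have e := decompose m hm
  have hcard := congrArg (fun s : Multiset VG => ((Multiset.card s : ℕ) : ℚ)) e
  have hsum := congrArg Multiset.sum e
  simp only [Multiset.card_add, Multiset.card_replicate, Nat.cast_add] at hcard
  simp only [Multiset.sum_add, Multiset.sum_replicate] at hsum
  have hs0 := congrFun hsum 0
  have hs1 := congrFun hsum 1
  simp only [Pi.add_apply, Pi.smul_apply, smul_eq_mul, nsmul_eq_mul] at hs0 hs1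
  norm_num at hs0 hs1
  exact ⟨hcard, by rw [hs0]; ring, by rw [hs1]; ring⟩

/-- the key counting identity: shifting by `q` copies of a root `r` -/
lemma PG_shift (k q : ℕ) (w ν r : VG) (hr : r ∈ posG) (hw : w + q • r = ν)
    (hcnt : ∀ m : Multiset VG, Multiset.card m = k → (∀ x ∈ m, x ∈ posG) → m.sum = ν →
      q ≤ m.count r) :
    PG k ν = Set.ncard {u : Multiset VG |
      Multiset.card u + q = k ∧ (∀ x ∈ u, x ∈ posG) ∧ u.sum = w} := by
  unfold PG
  have himg : {m : Multiset VG | Multiset.card m = k ∧ (∀ x ∈ m, x ∈ posG) ∧ m.sum = ν}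
      = (fun u => u + Multiset.replicate q r) ''
        {u : Multiset VG | Multiset.card u + q = k ∧ (∀ x ∈ u, x ∈ posG) ∧ u.sum = w} := by
    ext m
    simp only [Set.mem_setOf_eq, Set.mem_image]
    constructor
    · rintro ⟨hc, hp, hs⟩
      have hle : Multiset.replicate q r ≤ m := by
        rw [← Multiset.le_count_iff_replicate_le]; exact hcnt m hc hp hs
      obtain ⟨u, hu⟩ := Multiset.le_iff_exists_add.mp hle
      refine ⟨u, ⟨?_, ?_, ?_⟩, ?_⟩
      · rw [hu] at hc
        simp only [Multiset.card_add, Multiset.card_replicate] at hc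
        omega
      · intro x hx
        exact hp x (by rw [hu]; exact Multiset.mem_add.2 (Or.inr hx))
      · have : m.sum = q • r + u.sum := by
          rw [hu, Multiset.sum_add, Multiset.sum_replicate]
        rw [this] at hs
        have hw' : q • r + w = ν := by rw [add_comm]; exact hw
        have := hs.trans hw'.symm
        exact add_left_cancel this
      · rw [hu, add_comm]
    · rintro ⟨u, ⟨hc, hp, hs⟩, rfl⟩
      refine ⟨?_, ?_, ?_⟩
      · simp only [Multiset.card_add, Multiset.card_replicate]; omega
      · intro x hx
        rcases Multiset.mem_add.1 hx with h | h
        · exact hp x h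
        · rw [Multiset.eq_of_mem_replicate h]; exact hr
      · rw [Multiset.sum_add, Multiset.sum_replicate, hs, hw]
  rw [himg, Set.ncard_image_of_injective _ (add_left_injective _)]

lemma sum_coord1_nonneg (m : Multiset VG) (hm : ∀ x ∈ m, x ∈ posG) : 0 ≤ m.sum 1 := by
  induction m using Multiset.induction_on with
  | empty => simp
  | cons a s ih =>
      have ha : a ∈ posG := hm a (Multiset.mem_cons_self a s)
      have hs : 0 ≤ s.sum 1 := ih (fun x hx => hm x (Multiset.mem_cons_of_mem hx))
      have ha1 : 0 ≤ a 1 := by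
        simp only [posG, Finset.mem_insert, Finset.mem_singleton] at ha
        rcases ha with rfl|rfl|rfl|rfl|rfl|rfl <;> norm_num
      rw [Multiset.sum_cons]
      simpa using add_nonneg ha1 hs

lemma PG_zero1 (k : ℕ) (ν : VG) (h : ν 1 < 0) : PG k ν = 0 := by
  unfold PG
  have : {m : Multiset VG | Multiset.card m = k ∧ (∀ x ∈ m, x ∈ posG) ∧ m.sum = ν}
      = (∅ : Set (Multiset VG)) := by
    ext m
    simp only [Set.mem_setOf_eq, Set.mem_empty_iff_false, iff_false, not_and]
    intro _ hp hs
    have := sum_coord1_nonneg m hp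
    rw [hs] at this
    linarith
  rw [this, Set.ncard_empty]

/-- counting bound for the identity and `s₁` terms -/
lemma cntA (a b k : ℕ) (hk : (k : ℤ) ≤ (a : ℤ) + (b : ℤ) - 2) (m : Multiset VG)
    (h1 : Multiset.card m = k) (h2 : ∀ x ∈ m, x ∈ posG)
    (h3 : m.sum 1 = (a : ℚ) + 2*b - 1) : b + 1 ≤ m.count ![3,2] := by
  obtain ⟨e0, _, e2⟩ := count_eqs m h2
  rw [h3] at e2
  rw [h1] at e0
  have hk' : (k : ℚ) ≤ (a : ℚ) + b - 2 := by exact_mod_cast hk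
  have nn : (0:ℚ) ≤ m.count ![1,0] := Nat.cast_nonneg _
  have : ((b : ℚ) + 1) ≤ (m.count ![3,2] : ℚ) := by linarith
  exact_mod_cast this

/-- counting bound for the `s₂` term -/
lemma cntC (a b k : ℕ) (hk : (k : ℤ) ≤ (a : ℤ) + (b : ℤ) - 2) (m : Multiset VG)
    (h1 : Multiset.card m = k) (h2 : ∀ x ∈ m, x ∈ posG)
    (h3 : m.sum 0 = 2*(a : ℚ) + 3*b - 2) (h4 : m.sum 1 = (a : ℚ) + b - 2) :
    b + 1 ≤ m.count ![3,1] := by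
  obtain ⟨e0, e1, e2⟩ := count_eqs m h2
  rw [h3] at e1
  rw [h4] at e2
  rw [h1] at e0
  have hk' : (k : ℚ) ≤ (a : ℚ) + b - 2 := by exact_mod_cast hk
  have nn2 : (0:ℚ) ≤ m.count ![0,1] := Nat.cast_nonneg _
  have nn3 : (0:ℚ) ≤ m.count ![1,1] := Nat.cast_nonneg _
  have : ((b : ℚ) + 1) ≤ (m.count ![3,1] : ℚ) := by linarith
  exact_mod_cast this

/-- counting bound for the `s₁s₂` term -/
lemma cntD (a b k : ℕ) (hk : (k : ℤ) ≤ (a : ℤ) + (b : ℤ) - 2) (m : Multiset VG)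
    (h1 : Multiset.card m = k) (h2 : ∀ x ∈ m, x ∈ posG)
    (h3 : m.sum 0 = (a : ℚ) - 6) (h4 : m.sum 1 = (a : ℚ) + b - 2) :
    b + 1 ≤ m.count ![0,1] := by
  obtain ⟨e0, e1, e2⟩ := count_eqs m h2
  rw [h3] at e1
  rw [h4] at e2
  rw [h1] at e0
  have hk' : (k : ℚ) ≤ (a : ℚ) + b - 2 := by exact_mod_cast hk
  have nn1 : (0:ℚ) ≤ m.count ![1,0] := Nat.cast_nonneg _
  have nn4 : (0:ℚ) ≤ m.count ![2,1] := Nat.cast_nonneg _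
  have nn5 : (0:ℚ) ≤ m.count ![3,1] := Nat.cast_nonneg _
  have : ((b : ℚ) + 1) ≤ (m.count ![0,1] : ℚ) := by linarith
  exact_mod_cast this

lemma lenG_calc (A : Matrix (Fin 2) (Fin 2) ℚ) (n : ℕ) (l : List (Fin 2))
    (hl : l.length = n) (hA : (l.map matG).prod = A)
    (hlb : ∀ l' : List (Fin 2), l'.length < n → (l'.map matG).prod ≠ A) :
    lenG (A.mulVec) = n := by
  apply le_antisymm
  · exact Nat.sInf_le ⟨l, hl, by rw [compG_eq, hA]⟩
  · refine le_csInf ⟨n, ?_⟩ ?_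
    · exact ⟨l, hl, by rw [compG_eq, hA]⟩
    rintro m ⟨l', hl', he⟩
    by_contra hm
    push_neg at hm
    refine hlb l' (hl' ▸ hm) (mulVec_injective ?_)
    rw [compG_eq] at he
    exact he.symm

-- For `λ = aω₁ + bω₂` with `a ≥ 1`, `0 ≤ b ≤ 2` and every `k ≤ a + b - 2`:
-- `∑_{u ∈ W} (-1)^{ℓ(u)} P_k(u·λ - ω₁) = 0`, where `·` is the dot action.
theorem statement16 (W : Finset (VG → VG))
    (hW : ∀ u, u ∈ W ↔ ∃ l : List (Fin 2), u = compG l)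
    (a b : ℕ) (ha : 1 ≤ a) (hb : b ≤ 2) (k : ℕ)
    (hk : (k : ℤ) ≤ (a : ℤ) + (b : ℤ) - 2) :
    ∑ u ∈ W, (-1 : ℤ) ^ lenG u *
      (PG k (u ((a : ℚ) • ω₁G + (b : ℚ) • ω₂G + ρG) - ρG - ω₁G) : ℤ) = 0 := by
  classical
  have ha' : (1 : ℚ) ≤ (a : ℚ) := by exact_mod_cast ha
  have hb' : (b : ℚ) ≤ 2 := by exact_mod_cast hb
  have hinj : ∀ (A B : Matrix (Fin 2) (Fin 2) ℚ), A ≠ B → A.mulVec ≠ B.mulVec :=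
    fun A B h hc => h (mulVec_injective hc)
  have ne01 : (1 : Matrix (Fin 2) (Fin 2) ℚ) ≠ !![-1,3;0,1] := by
    norm_num [← Matrix.ext_iff, Fin.forall_fin_two, Matrix.one_apply]
  have ne02 : (1 : Matrix (Fin 2) (Fin 2) ℚ) ≠ !![1,0;1,-1] := by
    norm_num [← Matrix.ext_iff, Fin.forall_fin_two, Matrix.one_apply]
  have ne03 : (1 : Matrix (Fin 2) (Fin 2) ℚ) ≠ !![2,-3;1,-1] := by
    norm_num [← Matrix.ext_iff, Fin.forall_fin_two, Matrix.one_apply]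
  have ne04 : (1 : Matrix (Fin 2) (Fin 2) ℚ) ≠ !![-1,3;-1,2] := by
    norm_num [← Matrix.ext_iff, Fin.forall_fin_two, Matrix.one_apply]
  have ne12 : (!![-1,3;0,1] : Matrix (Fin 2) (Fin 2) ℚ) ≠ !![1,0;1,-1] := by
    norm_num [funext_iff, Fin.forall_fin_two]
  have ne13 : (!![-1,3;0,1] : Matrix (Fin 2) (Fin 2) ℚ) ≠ !![2,-3;1,-1] := by
    norm_num [funext_iff, Fin.forall_fin_two]
  have ne14 : (!![-1,3;0,1] : Matrix (Fin 2) (Fin 2) ℚ) ≠ !![-1,3;-1,2] := by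
    norm_num [funext_iff, Fin.forall_fin_two]
  have ne23 : (!![1,0;1,-1] : Matrix (Fin 2) (Fin 2) ℚ) ≠ !![2,-3;1,-1] := by
    norm_num [funext_iff, Fin.forall_fin_two]
  have ne24 : (!![1,0;1,-1] : Matrix (Fin 2) (Fin 2) ℚ) ≠ !![-1,3;-1,2] := by
    norm_num [funext_iff, Fin.forall_fin_two]
  have ne34 : (!![2,-3;1,-1] : Matrix (Fin 2) (Fin 2) ℚ) ≠ !![-1,3;-1,2] := by
    norm_num [funext_iff, Fin.forall_fin_two]
  -- lengths
  have l0 : lenG ((1 : Matrix (Fin 2) (Fin 2) ℚ).mulVec) = 0 :=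
    lenG_calc 1 0 [] rfl (by simp) (by intro l' h; omega)
  have l1 : lenG ((!![-1,3;0,1] : Matrix (Fin 2) (Fin 2) ℚ).mulVec) = 1 := by
    refine lenG_calc _ 1 [0] rfl (by simp [matG]) ?_
    intro l' hl
    rcases l' with _ | ⟨i, t⟩
    · simpa using ne01
    · simp at hl
  have l2 : lenG ((!![1,0;1,-1] : Matrix (Fin 2) (Fin 2) ℚ).mulVec) = 1 := by
    refine lenG_calc _ 1 [1] rfl (by simp [matG]) ?_
    intro l' hl
    rcases l' with _ | ⟨i, t⟩
    · simpa using ne02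
    · simp at hl
  have l3 : lenG ((!![2,-3;1,-1] : Matrix (Fin 2) (Fin 2) ℚ).mulVec) = 2 := by
    refine lenG_calc _ 2 [0, 1] rfl (by norm_num [matG, Matrix.mul_fin_two]) ?_
    intro l' hl
    rcases l' with _ | ⟨i, _ | ⟨j, t⟩⟩
    · simpa using ne03
    · fin_cases i <;> simp [matG] <;>
        norm_num [funext_iff, Fin.forall_fin_two]
    · simp at hl
  have l4 : lenG ((!![-1,3;-1,2] : Matrix (Fin 2) (Fin 2) ℚ).mulVec) = 2 := by
    refine lenG_calc _ 2 [1, 0] rfl (by norm_num [matG, Matrix.mul_fin_two]) ?_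
    intro l' hl
    rcases l' with _ | ⟨i, _ | ⟨j, t⟩⟩
    · simpa using ne04
    · fin_cases i <;> simp [matG] <;>
        norm_num [funext_iff, Fin.forall_fin_two]
    · simp at hl
  have hμ : (a : ℚ) • ω₁G + (b : ℚ) • ω₂G + ρG = ![2*(a:ℚ)+3*b+5, (a:ℚ)+2*b+3] := by
    rw [rho_eq, ω₁G, ω₂G]; funext i; fin_cases i <;> simp <;> ring
  set V : Finset (VG → VG) :=
    {(1 : Matrix (Fin 2) (Fin 2) ℚ).mulVec,
     (!![-1,3;0,1] : Matrix (Fin 2) (Fin 2) ℚ).mulVec,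
     (!![1,0;1,-1] : Matrix (Fin 2) (Fin 2) ℚ).mulVec,
     (!![2,-3;1,-1] : Matrix (Fin 2) (Fin 2) ℚ).mulVec,
     (!![-1,3;-1,2] : Matrix (Fin 2) (Fin 2) ℚ).mulVec} with hV
  clear_value V
  have hVsub : V ⊆ W := by
    intro u hu
    rw [hV] at hu
    simp only [Finset.mem_insert, Finset.mem_singleton] at hu
    rcases hu with rfl|rfl|rfl|rfl|rfl
    · exact (hW _).2 ⟨[], by rw [compG_eq]; simp⟩
    · refine (hW _).2 ⟨[0], ?_⟩
      have h : ((([0] : List (Fin 2)).map matG).prod) = !![-1,3;0,1] := by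
        simp [matG]
      rw [compG_eq, h]
    · refine (hW _).2 ⟨[1], ?_⟩
      have h : ((([1] : List (Fin 2)).map matG).prod) = !![1,0;1,-1] := by
        simp [matG]
      rw [compG_eq, h]
    · refine (hW _).2 ⟨[0, 1], ?_⟩
      have h : ((([0, 1] : List (Fin 2)).map matG).prod) = !![2,-3;1,-1] := by
        norm_num [matG, Matrix.mul_fin_two]
      rw [compG_eq, h]
    · refine (hW _).2 ⟨[1, 0], ?_⟩
      have h : ((([1, 0] : List (Fin 2)).map matG).prod) = !![-1,3;-1,2] := by
        norm_num [matG, Matrix.mul_fin_two]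
      rw [compG_eq, h]
  have hzero : ∀ u ∈ W, u ∉ V →
      (-1 : ℤ) ^ lenG u *
        (PG k (u ((a : ℚ) • ω₁G + (b : ℚ) • ω₂G + ρG) - ρG - ω₁G) : ℤ) = 0 := by
    intro u hu hnv
    obtain ⟨l, rfl⟩ := (hW u).1 hu
    rw [compG_eq] at hnv ⊢
    have hP := prodG_mem l
    simp only [G12, List.mem_cons, List.not_mem_nil, or_false] at hP
    rcases hP with hP|hP|hP|hP|hP|hP|hP|hP|hP|hP|hP|hP <;> rw [hP] at hnv ⊢
    · exact absurd (by rw [hV]; simp) hnv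
    · exact absurd (by rw [hV]; simp) hnv
    · exact absurd (by rw [hV]; simp) hnv
    · exact absurd (by rw [hV]; simp) hnv
    · exact absurd (by rw [hV]; simp) hnv
    · rw [hμ, nu_calc,
        PG_zero1 k _ (by norm_num; push_cast; linarith)]
      simp
    · rw [hμ, nu_calc,
        PG_zero1 k _ (by norm_num; push_cast; linarith)]
      simp
    · rw [hμ, nu_calc,
        PG_zero1 k _ (by norm_num; push_cast; linarith)]
      simp
    · rw [hμ, nu_calc,
        PG_zero1 k _ (by norm_num; push_cast; linarith)]
      simp
    · rw [hμ, nu_calc,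
        PG_zero1 k _ (by norm_num; push_cast; linarith)]
      simp
    · rw [hμ, nu_calc,
        PG_zero1 k _ (by norm_num; push_cast; linarith)]
      simp
    · rw [hμ, nu_calc,
        PG_zero1 k _ (by norm_num; push_cast; linarith)]
      simp
  have hsum : ∑ u ∈ V, (-1 : ℤ) ^ lenG u *
        (PG k (u ((a : ℚ) • ω₁G + (b : ℚ) • ω₂G + ρG) - ρG - ω₁G) : ℤ)
      = ∑ u ∈ W, (-1 : ℤ) ^ lenG u *
        (PG k (u ((a : ℚ) • ω₁G + (b : ℚ) • ω₂G + ρG) - ρG - ω₁G) : ℤ) :=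
    Finset.sum_subset hVsub hzero
  refine Eq.trans hsum.symm ?_
  rw [hV]
  rw [Finset.sum_insert (by
        simp only [Finset.mem_insert, Finset.mem_singleton]
        push_neg
        exact ⟨hinj _ _ ne01, hinj _ _ ne02, hinj _ _ ne03, hinj _ _ ne04⟩),
      Finset.sum_insert (by
        simp only [Finset.mem_insert, Finset.mem_singleton]
        push_neg
        exact ⟨hinj _ _ ne12, hinj _ _ ne13, hinj _ _ ne14⟩),
      Finset.sum_insert (by
        simp only [Finset.mem_insert, Finset.mem_singleton]
        push_neg
        exact ⟨hinj _ _ ne23, hinj _ _ ne24⟩),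
      Finset.sum_insert (by
        simp only [Finset.mem_singleton]
        exact hinj _ _ ne34),
      Finset.sum_singleton]
  rw [l0, l1, l2, l3, l4, hμ]
  -- the five weight vectors
  have hA : (1 : Matrix (Fin 2) (Fin 2) ℚ).mulVec ![2*(a:ℚ)+3*b+5, (a:ℚ)+2*b+3] - ρG - ω₁G
      = ![2*(a:ℚ)+3*b-2, (a:ℚ)+2*b-1] := by
    rw [Matrix.one_fin_two, nu_calc]
    exact vec2_eq (by ring) (by ring)
  have hB : (!![-1,3;0,1] : Matrix (Fin 2) (Fin 2) ℚ).mulVec ![2*(a:ℚ)+3*b+5, (a:ℚ)+2*b+3]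
      - ρG - ω₁G = ![(a:ℚ)+3*b-3, (a:ℚ)+2*b-1] := by
    rw [nu_calc]
    exact vec2_eq (by ring) (by ring)
  have hC : (!![1,0;1,-1] : Matrix (Fin 2) (Fin 2) ℚ).mulVec ![2*(a:ℚ)+3*b+5, (a:ℚ)+2*b+3]
      - ρG - ω₁G = ![2*(a:ℚ)+3*b-2, (a:ℚ)+b-2] := by
    rw [nu_calc]
    exact vec2_eq (by ring) (by ring)
  have hD : (!![2,-3;1,-1] : Matrix (Fin 2) (Fin 2) ℚ).mulVec ![2*(a:ℚ)+3*b+5, (a:ℚ)+2*b+3]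
      - ρG - ω₁G = ![(a:ℚ)-6, (a:ℚ)+b-2] := by
    rw [nu_calc]
    exact vec2_eq (by ring) (by ring)
  have hE : (!![-1,3;-1,2] : Matrix (Fin 2) (Fin 2) ℚ).mulVec ![2*(a:ℚ)+3*b+5, (a:ℚ)+2*b+3]
      - ρG - ω₁G = ![(a:ℚ)+3*b-3, (b:ℚ)-3] := by
    rw [nu_calc]
    exact vec2_eq (by ring) (by ring)
  rw [hA, hB, hC, hD, hE]
  -- the last term vanishes
  rw [PG_zero1 k ![(a:ℚ)+3*b-3, (b:ℚ)-3] (by norm_num; linarith)]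
  -- the four remaining terms cancel in pairs
  have eA : PG k ![2*(a:ℚ)+3*b-2, (a:ℚ)+2*b-1] = Set.ncard {u : Multiset VG |
      Multiset.card u + (b+1) = k ∧ (∀ x ∈ u, x ∈ posG) ∧ u.sum = ![2*(a:ℚ)-5, (a:ℚ)-3]} := by
    refine PG_shift k (b+1) _ _ ![3,2] (by simp [posG]) ?_ ?_
    · funext i; fin_cases i <;> simp <;> push_cast <;> ring
    · intro m hc hp hs
      refine cntA a b k hk m hc hp ?_
      have h := congrFun hs 1
      simp at h
      linarith
  have eB : PG k ![(a:ℚ)+3*b-3, (a:ℚ)+2*b-1] = Set.ncard {u : Multiset VG |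
      Multiset.card u + (b+1) = k ∧ (∀ x ∈ u, x ∈ posG) ∧ u.sum = ![(a:ℚ)-6, (a:ℚ)-3]} := by
    refine PG_shift k (b+1) _ _ ![3,2] (by simp [posG]) ?_ ?_
    · funext i; fin_cases i <;> simp <;> push_cast <;> ring
    · intro m hc hp hs
      refine cntA a b k hk m hc hp ?_
      have h := congrFun hs 1
      simp at h
      linarith
  have eC : PG k ![2*(a:ℚ)+3*b-2, (a:ℚ)+b-2] = Set.ncard {u : Multiset VG |
      Multiset.card u + (b+1) = k ∧ (∀ x ∈ u, x ∈ posG) ∧ u.sum = ![2*(a:ℚ)-5, (a:ℚ)-3]} := by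
    refine PG_shift k (b+1) _ _ ![3,1] (by simp [posG]) ?_ ?_
    · funext i; fin_cases i <;> simp <;> push_cast <;> ring
    · intro m hc hp hs
      refine cntC a b k hk m hc hp ?_ ?_
      · have h := congrFun hs 0
        simp at h
        linarith
      · have h := congrFun hs 1
        simp at h
        linarith
  have eD : PG k ![(a:ℚ)-6, (a:ℚ)+b-2] = Set.ncard {u : Multiset VG |
      Multiset.card u + (b+1) = k ∧ (∀ x ∈ u, x ∈ posG) ∧ u.sum = ![(a:ℚ)-6, (a:ℚ)-3]} := by
    refine PG_shift k (b+1) _ _ ![0,1] (by simp [posG]) ?_ ?_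
    · funext i; fin_cases i <;> simp <;> push_cast <;> ring
    · intro m hc hp hs
      refine cntD a b k hk m hc hp ?_ ?_
      · have h := congrFun hs 0
        simp at h
        linarith
      · have h := congrFun hs 1
        simp at h
        linarith
  rw [eA, eB, eC, eD]
  ring

end
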